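/- For integers n ≥ 1 and k ≥ 2, M_k^n ≤ min{ n/(n+1), (1 + log(kn))/k }, where M_k^n is the supremum of π(F) over families F of n ships of size k in ℤ. -/

import Mathlib

/-- A shooting pattern `X` hits a ship `S` if every translate of `S` intersects `X`. -/
def Hits (X S : Set ℤ) : Prop := ∀ n : ℤ, ∃ s ∈ S, n + s ∈ X

/-- Lower asymptotic density of a set of integers. -/
noncomputable def lowerDensity (X : Set ℤ) : ℝ :=
  Filter.liminf (fun N : ℕ =>
    ((X ∩ Set.Icc (-(N:ℤ)) (N:ℤ)).ncard : ℝ) / (2 * N + 1)) Filter.atTop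

/-- Optimal piercing density of a family of ships. -/
noncomputable def piercing (F : Set (Set ℤ)) : ℝ :=
  sInf (lowerDensity '' {X | ∀ S ∈ F, Hits X S})


-- ### auxiliary material ###

section Aux
open Filter Set

lemma window_le (X : Set ℤ) (N : ℕ) : (X ∩ Set.Icc (-(N:ℤ)) (N:ℤ)).ncard ≤ 2*N+1 := by
  calc (X ∩ Set.Icc (-(N:ℤ)) (N:ℤ)).ncard ≤ (Set.Icc (-(N:ℤ)) (N:ℤ)).ncard :=
        Set.ncard_le_ncard inter_subset_right (Set.finite_Icc _ _)
    _ = 2*N+1 := by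
        rw [← Finset.coe_Icc, Set.ncard_coe_finset, Int.card_Icc]; omega

lemma ratio_mem (X : Set ℤ) (N : ℕ) :
    ((X ∩ Set.Icc (-(N:ℤ)) (N:ℤ)).ncard : ℝ) / (2 * N + 1) ∈ Set.Icc (0:ℝ) 1 := by
  have h1 : (0:ℝ) < 2*(N:ℝ)+1 := by positivity
  constructor
  · positivity
  · rw [div_le_one h1]
    have := window_le X N
    calc ((X ∩ Set.Icc (-(N:ℤ)) (N:ℤ)).ncard : ℝ) ≤ ((2*N+1 : ℕ) : ℝ) := by exact_mod_cast this
      _ = 2*N+1 := by push_cast; ring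

lemma lowerDensity_nonneg (X : Set ℤ) : 0 ≤ lowerDensity X := by
  have hb : IsBoundedUnder (· ≤ ·) atTop (fun N : ℕ =>
      ((X ∩ Set.Icc (-(N:ℤ)) (N:ℤ)).ncard : ℝ) / (2 * N + 1)) :=
    Filter.isBoundedUnder_of ⟨1, fun N => (ratio_mem X N).2⟩
  exact Filter.le_liminf_of_le hb.isCoboundedUnder_ge
    (Filter.Eventually.of_forall fun N => (ratio_mem X N).1)

lemma piercing_le (F : Set (Set ℤ)) (X : Set ℤ) (hX : ∀ S ∈ F, Hits X S) (c : ℝ)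
    (hd : lowerDensity X ≤ c) : piercing F ≤ c :=
  le_trans (csInf_le ⟨0, fun y ⟨Z, _, hZ⟩ => hZ ▸ lowerDensity_nonneg Z⟩ ⟨X, hX, rfl⟩) hd




lemma lowerDensity_le_of (X : Set ℤ) (c C : ℝ) (hc : 0 ≤ c)
    (h : ∀ N : ℕ, ((X ∩ Set.Icc (-(N:ℤ)) (N:ℤ)).ncard : ℝ) ≤ c * (2*N+1) + C) :
    lowerDensity X ≤ c := by
  set u := fun N : ℕ => ((X ∩ Set.Icc (-(N:ℤ)) (N:ℤ)).ncard : ℝ) / (2 * N + 1) with hu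
  set v := fun N : ℕ => c + C / (2*(N:ℝ)+1) with hv
  have hpos : ∀ N : ℕ, (0:ℝ) < 2*(N:ℝ)+1 := fun N => by positivity
  have huv : ∀ N, u N ≤ v N := by
    intro N
    rw [hu, hv]
    dsimp only
    rw [div_le_iff₀ (hpos N)]
    calc ((X ∩ Set.Icc (-(N:ℤ)) (N:ℤ)).ncard : ℝ) ≤ c * (2*N+1) + C := h N
      _ = (c + C/(2*N+1)) * (2*N+1) := by field_simp
  have h0 : ∀ N, 0 ≤ u N := fun N => by rw [hu]; positivity
  have hvt : Filter.Tendsto v Filter.atTop (nhds c) := by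
    rw [hv]
    have : Filter.Tendsto (fun N : ℕ => C / (2*(N:ℝ)+1)) Filter.atTop (nhds 0) := by
      apply Filter.Tendsto.div_atTop (tendsto_const_nhds)
      apply Filter.tendsto_atTop_add_const_right
      exact (tendsto_natCast_atTop_atTop).const_mul_atTop (by norm_num)
    simpa using (tendsto_const_nhds.add this : Filter.Tendsto (fun N : ℕ => c + C/(2*(N:ℝ)+1)) _ (nhds (c+0)))
  have h1 : Filter.liminf u Filter.atTop ≤ Filter.liminf v Filter.atTop :=
    Filter.liminf_le_liminf (Filter.Eventually.of_forall huv)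
      (Filter.isBoundedUnder_of ⟨0, fun N => (h0 N)⟩)
      (hvt.isBoundedUnder_le.isCoboundedUnder_ge)
  rw [hvt.liminf_eq] at h1; exact h1


lemma cast_ediv_bounds (a b : ℤ) (hb : 0 < b) :
    (a:ℝ)/b - 1 ≤ ((a / b : ℤ) : ℝ) ∧ ((a / b : ℤ) : ℝ) ≤ (a:ℝ)/b := by
  have h1 : b * (a/b) + a % b = a := Int.mul_ediv_add_emod a b
  have h2 : 0 ≤ a % b := Int.emod_nonneg a hb.ne'
  have h3 : a % b < b := Int.emod_lt_of_pos a hb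
  have hbr : (0:ℝ) < (b:ℝ) := by exact_mod_cast hb
  have h1' : (b:ℝ) * ((a/b : ℤ):ℝ) + ((a % b : ℤ):ℝ) = a := by exact_mod_cast h1
  have h2' : (0:ℝ) ≤ ((a % b : ℤ):ℝ) := by exact_mod_cast h2
  have h3' : ((a % b : ℤ):ℝ) < b := by exact_mod_cast h3
  constructor
  · rw [div_sub_one hbr.ne', div_le_iff₀ hbr]; nlinarith
  · rw [le_div_iff₀ hbr]; nlinarith

lemma count_periodized (R : Finset ℤ) (p : ℕ) (hp : 0 < p) (N : ℕ) :
    (({x : ℤ | x % (p:ℤ) ∈ R} ∩ Set.Icc (-(N:ℤ)) (N:ℤ)).ncard : ℝ)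
      ≤ (R.card : ℝ) / p * (2*N+1) + 2*R.card := by
  have hpz : (0:ℤ) < (p:ℤ) := by exact_mod_cast hp
  set lo : ℤ := (-(N:ℤ)) / p with hlo_def
  set hi : ℤ := (N:ℤ) / p with hhi_def
  have hlohi : lo ≤ hi := Int.ediv_le_ediv hpz (by omega)
  have key : ({x : ℤ | x % (p:ℤ) ∈ R} ∩ Set.Icc (-(N:ℤ)) (N:ℤ)).ncard
      ≤ (R ×ˢ Finset.Icc lo hi).card := by
    rw [← Set.ncard_coe_finset]
    refine Set.ncard_le_ncard_of_injOn (fun x => (x % p, x / p)) ?_ ?_ (Finset.finite_toSet _)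
    · rintro x ⟨hx1, hx2⟩
      simp only [Finset.coe_product, Set.mem_prod, Finset.mem_coe, Finset.mem_Icc]
      exact ⟨hx1, Int.ediv_le_ediv hpz hx2.1, Int.ediv_le_ediv hpz hx2.2⟩
    · intro x hx y hy hxy
      have h1 : (p:ℤ) * (x / p) + x % p = x := Int.mul_ediv_add_emod x p
      have h2 : (p:ℤ) * (y / p) + y % p = y := Int.mul_ediv_add_emod y p
      have e1 : x % (p:ℤ) = y % p := congrArg Prod.fst hxy
      have e2 : x / (p:ℤ) = y / p := congrArg Prod.snd hxy
      rw [← h1, ← h2, e1, e2]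
  have hIcc : ((Finset.Icc lo hi).card : ℝ) ≤ 2*(N:ℝ)/p + 2 := by
    rw [Int.card_Icc]
    have b1 := (cast_ediv_bounds (-(N:ℤ)) p hpz).1
    have b2 := (cast_ediv_bounds (N:ℤ) p hpz).2
    have e : (((hi + 1 - lo).toNat : ℤ) : ℝ) = ((hi:ℝ) + 1 - lo) := by
      rw [Int.toNat_of_nonneg (by omega)]; push_cast; ring
    have e2 : (((hi + 1 - lo).toNat : ℕ) : ℝ) = ((hi:ℝ) + 1 - lo) := by
      rw [← e]; push_cast; ring
    rw [e2]
    push_cast at b1 b2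
    rw [show (-(N:ℝ))/p = -((N:ℝ)/p) by ring] at b1
    rw [show 2*(N:ℝ)/p = (N:ℝ)/p + (N:ℝ)/p by ring]
    rw [hlo_def, hhi_def]
    push_cast
    linarith
  have hRnn : (0:ℝ) ≤ (R.card : ℝ) := by positivity
  have hpr : (0:ℝ) < (p:ℝ) := by exact_mod_cast hp
  calc (({x : ℤ | x % (p:ℤ) ∈ R} ∩ Set.Icc (-(N:ℤ)) (N:ℤ)).ncard : ℝ)
      ≤ ((R ×ˢ Finset.Icc lo hi).card : ℝ) := by exact_mod_cast key
    _ = (R.card : ℝ) * ((Finset.Icc lo hi).card : ℝ) := by rw [Finset.card_product]; push_cast; ring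
    _ ≤ R.card * (2*(N:ℝ)/p + 2) := mul_le_mul_of_nonneg_left hIcc hRnn
    _ = (R.card : ℝ)/p * (2*N) + 2*R.card := by field_simp
    _ ≤ (R.card : ℝ) / p * (2*N+1) + 2*R.card := by
        have : (R.card : ℝ)/p * (2*N) ≤ (R.card : ℝ)/p * (2*N+1) :=
          mul_le_mul_of_nonneg_left (by linarith) (by positivity)
        linarith


lemma piercing_le_mod (F : Set (Set ℤ)) (R : Finset ℤ) (p : ℕ) (hp : 0 < p)
    (hhits : ∀ S ∈ F, ∀ m : ℤ, ∃ s ∈ S, (m + s) % (p:ℤ) ∈ R) :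
    piercing F ≤ (R.card : ℝ) / p := by
  apply piercing_le F {x : ℤ | x % (p:ℤ) ∈ R}
  · intro S hS m
    obtain ⟨s, hs, h⟩ := hhits S hS m
    exact ⟨s, hs, h⟩
  · exact lowerDensity_le_of _ _ (2*R.card) (by positivity) (count_periodized R p hp)

/-- one step of the greedy shooting rule -/
def gstep {n : ℕ} (B : Fin n → Finset ℤ) (hist : ℕ → Prop) (x : ℕ) : Prop :=
  ∃ i : Fin n, ∃ m mn : ℤ, (B i).max = (m : WithBot ℤ) ∧ (B i).min = (mn : WithTop ℤ) ∧
    m ≤ mn + (x:ℤ) ∧ ∀ s ∈ B i, s ≠ m → ¬ hist (((x:ℤ) + s - m).toNat)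

/-- history of greedy decisions on `[0, m)`. -/
def gH {n : ℕ} (B : Fin n → Finset ℤ) : ℕ → ℕ → Prop
  | 0 => fun _ => False
  | (m+1) => fun y => if y = m then gstep B (gH B m) m else gH B m y

def shot {n : ℕ} (B : Fin n → Finset ℤ) (x : ℕ) : Prop := gH B (x+1) x

lemma le_max_of_eq {s : Finset ℤ} {m x : ℤ} (hx : x ∈ s) (hm : s.max = (m : WithBot ℤ)) :
    x ≤ m := by
  have := Finset.le_max hx; rw [hm] at this; exact_mod_cast this

lemma min_le_of_eq' {s : Finset ℤ} {m x : ℤ} (hx : x ∈ s) (hm : s.min = (m : WithTop ℤ)) :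
    m ≤ x := by
  have := Finset.min_le hx; rw [hm] at this; exact_mod_cast this

lemma gH_agree {n : ℕ} (B : Fin n → Finset ℤ) :
    ∀ m' m y, y < m → m ≤ m' → (gH B m y ↔ gH B m' y) := by
  intro m'
  induction m' with
  | zero => intro m y hy hm; omega
  | succ m' ih =>
    intro m y hy hm
    rcases Nat.lt_or_ge y m' with h | h
    · rcases Nat.eq_or_lt_of_le hm with rfl | hlt
      · rfl
      · rw [ih m y hy (by omega)]
        show gH B m' y ↔ gH B (m'+1) y
        rw [show gH B (m'+1) y = if y = m' then gstep B (gH B m') m' else gH B m' y from rfl,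
          if_neg (by omega)]
    · have : m = m' + 1 := by omega
      subst this
      rfl

lemma gstep_congr {n : ℕ} (B : Fin n → Finset ℤ) (h1 h2 : ℕ → Prop) (x : ℕ)
    (h : ∀ y < x, (h1 y ↔ h2 y)) : gstep B h1 x ↔ gstep B h2 x := by
  constructor <;>
  · rintro ⟨i, m, mn, hm, hmn, hguard, hall⟩
    refine ⟨i, m, mn, hm, hmn, hguard, fun s hs hsm hshot => hall s hs hsm ?_⟩
    have hsle : s ≤ m := le_max_of_eq hs hm
    have hmnle : mn ≤ s := min_le_of_eq' hs hmn
    have hxpos : 0 < x := by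
      have : mn < m := lt_of_le_of_lt hmnle (lt_of_le_of_ne hsle hsm)
      omega
    have hlt : (((x:ℤ) + s - m).toNat) < x := by omega
    first
    | exact (h _ hlt).mp hshot
    | exact (h _ hlt).mpr hshot

lemma shot_iff {n : ℕ} (B : Fin n → Finset ℤ) (x : ℕ) :
    shot B x ↔ gstep B (shot B) x := by
  show gH B (x+1) x ↔ _
  rw [show gH B (x+1) x = if x = x then gstep B (gH B x) x else gH B x x from rfl, if_pos rfl]
  exact gstep_congr B _ _ x (fun y hy => (gH_agree B x (y+1) y (by omega) (by omega)).symm)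

/-- any translate of a ship lying in `[0,∞)` contains a shot cell. -/
lemma greedy_hits {n : ℕ} (B : Fin n → Finset ℤ) (i : Fin n) (m mn : ℤ)
    (hm : (B i).max = (m : WithBot ℤ)) (hmn : (B i).min = (mn : WithTop ℤ))
    (c : ℤ) (hc : 0 ≤ c + mn) :
    ∃ s ∈ B i, shot B ((c + s).toNat) := by
  by_contra hno
  push_neg at hno
  have hmem : m ∈ B i := Finset.mem_of_max hm
  have hmnm : mn ≤ m := min_le_of_eq' hmem hmn
  have hx : shot B ((c + m).toNat) := by
    rw [shot_iff]
    refine ⟨i, m, mn, hm, hmn, by omega, fun s hs hsm => ?_⟩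
    have : ((((c+m).toNat :ℕ):ℤ) + s - m).toNat = (c + s).toNat := by omega
    rw [this]
    exact hno s hs
  exact hno m hmem hx

open Classical in
theorem greedy_count {n : ℕ} (hn : 0 < n) (B : Fin n → Finset ℤ) (hB : ∀ i, 2 ≤ (B i).card)
    (L : ℕ)
    (shot : ℕ → Prop)
    (shot_iff : ∀ x, shot x ↔ ∃ i : Fin n, ∃ m mn : ℤ,
      (B i).max = (m : WithBot ℤ) ∧ (B i).min = (mn : WithTop ℤ) ∧
      m ≤ mn + (x:ℤ) ∧ ∀ s ∈ B i, s ≠ m → ¬ shot (((x:ℤ) + s - m).toNat)) :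
    (n+1) * ((Finset.range L).filter (fun x => shot x)).card ≤ n * L := by
  classical
  set Sh := (Finset.range L).filter (fun x => shot x) with hSh
  set Ho := (Finset.range L).filter (fun x => ¬ shot x) with hHo
  -- canonical data
  set mxv : Fin n → ℤ := fun i => ((B i).max).getD 0 with hmxv
  set s2 : Fin n → ℤ := fun i => (((B i).erase (mxv i)).max).getD 0 with hs2
  set f : ℕ → Fin n × ℕ := fun x =>
    if h : shot x then
      (((shot_iff x).mp h).choose, (((x:ℤ) + s2 ((shot_iff x).mp h).choose
        - mxv ((shot_iff x).mp h).choose).toNat))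
    else (⟨0, hn⟩, 0) with hf
  -- facts about a shot cell
  have key : ∀ x, (hx : shot x) → ∀ i, i = ((shot_iff x).mp hx).choose →
      (s2 i ∈ B i ∧ ¬ shot (((x:ℤ) + s2 i - mxv i).toNat) ∧
        0 ≤ (x:ℤ) + s2 i - mxv i ∧ (x:ℤ) + s2 i - mxv i < x) := by
    intro x hx i hi
    subst hi
    obtain ⟨m, mn, hm, hmn, hg, hall⟩ := ((shot_iff x).mp hx).choose_spec
    set i := ((shot_iff x).mp hx).choose with hi
    have hmx : mxv i = m := by rw [hmxv]; simp only; rw [hm]; rfl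
    have hcard : 1 ≤ ((B i).erase m).card := by
      have := hB i
      have : ((B i).erase m).card = (B i).card - 1 :=
        Finset.card_erase_of_mem (Finset.mem_of_max hm)
      omega
    obtain ⟨a, ha⟩ := Finset.max_of_nonempty (Finset.card_pos.mp hcard)
    have hs2a : s2 i = a := by rw [hs2]; simp only; rw [hmx, ha]; rfl
    have hamem : a ∈ (B i).erase m := Finset.mem_of_max ha
    have haB : a ∈ B i := Finset.mem_of_mem_erase hamem
    have hane : a ≠ m := Finset.ne_of_mem_erase hamem
    have halem : a ≤ m := by
      have := Finset.le_max haB; rw [hm] at this; exact_mod_cast this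
    have hmnlea : mn ≤ a := by
      have := Finset.min_le haB; rw [hmn] at this; exact_mod_cast this
    refine ⟨by rw [hs2a]; exact haB, ?_, ?_, ?_⟩
    · rw [hs2a, hmx]; exact hall a haB hane
    · rw [hs2a, hmx]; omega
    · rw [hs2a, hmx]; have : a < m := lt_of_le_of_ne halem hane; omega
  have hmaps : ∀ x ∈ Sh, f x ∈ (Finset.univ : Finset (Fin n)) ×ˢ Ho := by
    intro x hx
    rw [hSh, Finset.mem_filter] at hx
    obtain ⟨hxL, hsx⟩ := hx
    obtain ⟨h1, h2, h3, h4⟩ := key x hsx _ rfl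
    rw [hf]; simp only [dif_pos hsx]
    rw [Finset.mem_product]
    refine ⟨Finset.mem_univ _, ?_⟩
    rw [hHo, Finset.mem_filter, Finset.mem_range]
    constructor
    · rw [Finset.mem_range] at hxL; omega
    · exact h2
  have hinj : Set.InjOn f Sh := by
    intro x hx y hy hxy
    rw [hSh, Finset.mem_coe, Finset.mem_filter] at hx hy
    obtain ⟨hxL, hsx⟩ := hx
    obtain ⟨hyL, hsy⟩ := hy
    obtain ⟨_, _, hx3, _⟩ := key x hsx _ rfl
    obtain ⟨_, _, hy3, _⟩ := key y hsy _ rfl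
    rw [hf] at hxy
    simp only [dif_pos hsx, dif_pos hsy] at hxy
    have hieq : ((shot_iff x).mp hsx).choose = ((shot_iff y).mp hsy).choose :=
      congrArg Prod.fst hxy
    have h2 := congrArg Prod.snd hxy
    simp only at h2
    rw [← hieq] at h2 hy3
    set i := ((shot_iff x).mp hsx).choose
    omega
  have hcard : Sh.card ≤ ((Finset.univ : Finset (Fin n)) ×ˢ Ho).card :=
    Finset.card_le_card_of_injOn f hmaps hinj
  rw [Finset.card_product, Finset.card_univ, Fintype.card_fin] at hcard
  have hsum : Sh.card + Ho.card = L := by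
    rw [hSh, hHo]
    rw [Finset.card_filter_add_card_filter_not]
    exact Finset.card_range L
  have hmul : n * Sh.card + n * Ho.card = n * L := by rw [← Nat.mul_add, hsum]
  calc (n+1) * Sh.card = n * Sh.card + Sh.card := by ring
    _ ≤ n * Sh.card + n * Ho.card := Nat.add_le_add_left hcard _
    _ = n * L := hmul

open Classical in
theorem cover_exists {α : Type} (J : Finset α) (A : α → Finset ℤ) (U : Finset ℤ) (k : ℕ)
    (hk : 1 ≤ k) (hkU : k ≤ U.card)
    (hA : ∀ j ∈ J, A j ⊆ U ∧ (A j).card = k) :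
    ∀ t : ℕ, ∃ R : Finset ℤ, R.card ≤ t ∧
      (((J.filter (fun j => A j ∩ R = ∅)).card : ℝ)
        ≤ J.card * (1 - (k:ℝ)/U.card)^t) := by
  have hU0 : 0 < U.card := lt_of_lt_of_le hk hkU
  have hUr : (0:ℝ) < (U.card:ℝ) := by exact_mod_cast hU0
  have hfac : 0 ≤ 1 - (k:ℝ)/U.card := by
    rw [sub_nonneg, div_le_one hUr]; exact_mod_cast hkU
  intro t
  induction t with
  | zero =>
    refine ⟨∅, le_refl _, ?_⟩
    rw [pow_zero, mul_one]
    exact_mod_cast Finset.card_le_card (Finset.filter_subset _ _)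
  | succ t ih =>
    obtain ⟨R, hR, hM⟩ := ih
    set M := J.filter (fun j => A j ∩ R = ∅) with hMdef
    rcases Finset.eq_empty_or_nonempty M with hMe | hMne
    · refine ⟨R, le_trans hR (Nat.le_succ t), ?_⟩
      rw [← hMdef, hMe]
      simp only [Finset.card_empty, Nat.cast_zero]
      positivity
    · -- averaging
      have hsum : ∑ u ∈ U, ((M.filter (fun j => u ∈ A j)).card : ℝ) = k * M.card := by
        have : ∀ u ∈ U, ((M.filter (fun j => u ∈ A j)).card : ℝ)
            = ∑ j ∈ M, (if u ∈ A j then (1:ℝ) else 0) := by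
          intro u _
          rw [Finset.card_filter]
          push_cast
          rfl
        rw [Finset.sum_congr rfl this, Finset.sum_comm]
        have : ∀ j ∈ M, ∑ u ∈ U, (if u ∈ A j then (1:ℝ) else 0) = k := by
          intro j hj
          have hjJ : j ∈ J := Finset.mem_of_mem_filter j hj
          rw [← Finset.sum_filter, Finset.sum_const, Finset.filter_mem_eq_inter,
            Finset.inter_eq_right.mpr (hA j hjJ).1, (hA j hjJ).2]
          simp
        rw [Finset.sum_congr rfl this, Finset.sum_const, nsmul_eq_mul]
        ring
      have havg : ∃ u0 ∈ U, (k:ℝ) * M.card / U.card ≤ ((M.filter (fun j => u0 ∈ A j)).card : ℝ) := by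
        apply Finset.exists_le_of_sum_le (Finset.card_pos.mp hU0)
        rw [hsum, Finset.sum_const, nsmul_eq_mul]
        field_simp
        exact le_rfl
      obtain ⟨u0, hu0U, hcnt⟩ := havg
      refine ⟨insert u0 R, le_trans (Finset.card_insert_le _ _) (by omega), ?_⟩
      have hsub : J.filter (fun j => A j ∩ insert u0 R = ∅) ⊆ M.filter (fun j => u0 ∉ A j) := by
        intro j hj
        rw [Finset.mem_filter] at hj
        obtain ⟨hjJ, hjR'⟩ := hj
        have h1 : A j ∩ R = ∅ := by
          apply Finset.eq_empty_of_forall_notMem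
          intro x hx
          rw [Finset.mem_inter] at hx
          have : x ∈ A j ∩ insert u0 R := by
            rw [Finset.mem_inter]
            exact ⟨hx.1, Finset.mem_insert_of_mem hx.2⟩
          rw [hjR'] at this
          exact absurd this (Finset.notMem_empty x)
        rw [Finset.mem_filter]
        constructor
        · rw [hMdef, Finset.mem_filter]; exact ⟨hjJ, h1⟩
        · intro hu0A
          have : u0 ∈ A j ∩ insert u0 R :=
            Finset.mem_inter.mpr ⟨hu0A, Finset.mem_insert_self _ _⟩
          rw [hjR'] at this
          exact absurd this (Finset.notMem_empty u0)
      have hsplit : (M.filter (fun j => u0 ∉ A j)).card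
          = M.card - (M.filter (fun j => u0 ∈ A j)).card := by
        have := Finset.card_filter_add_card_filter_not
          (s := M) (p := fun j => u0 ∈ A j)
        omega
      have hcard2 : ((J.filter (fun j => A j ∩ insert u0 R = ∅)).card : ℝ)
          ≤ (M.card : ℝ) - (k:ℝ) * M.card / U.card := by
        have h1 : (J.filter (fun j => A j ∩ insert u0 R = ∅)).card
            ≤ (M.filter (fun j => u0 ∉ A j)).card := Finset.card_le_card hsub
        have h2 : ((M.filter (fun j => u0 ∉ A j)).card : ℝ)
            = (M.card : ℝ) - ((M.filter (fun j => u0 ∈ A j)).card : ℝ) := by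
          rw [hsplit]
          have : (M.filter (fun j => u0 ∈ A j)).card ≤ M.card :=
            Finset.card_le_card (Finset.filter_subset _ _)
          push_cast [this]
          ring
        calc ((J.filter (fun j => A j ∩ insert u0 R = ∅)).card : ℝ)
            ≤ ((M.filter (fun j => u0 ∉ A j)).card : ℝ) := by exact_mod_cast h1
          _ = (M.card : ℝ) - ((M.filter (fun j => u0 ∈ A j)).card : ℝ) := h2
          _ ≤ (M.card : ℝ) - (k:ℝ) * M.card / U.card := by linarith
      calc ((J.filter (fun j => A j ∩ insert u0 R = ∅)).card : ℝ)
          ≤ (M.card : ℝ) - (k:ℝ) * M.card / U.card := hcard2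
        _ = (M.card : ℝ) * (1 - (k:ℝ)/U.card) := by field_simp
        _ ≤ (J.card * (1 - (k:ℝ)/U.card)^t) * (1 - (k:ℝ)/U.card) := by
            apply mul_le_mul_of_nonneg_right hM hfac
        _ = J.card * (1 - (k:ℝ)/U.card)^(t+1) := by ring

open Classical in
lemma bound1 (n k : ℕ) (hn : 1 ≤ n) (hk : 2 ≤ k) (T : Fin n → Set ℤ)
    (hT : ∀ i, (T i).Finite ∧ (T i).ncard = k) :
    piercing {S | ∃ i, S = T i} ≤ (n:ℝ)/(n+1) := by
  apply le_of_forall_pos_le_add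
  intro ε hε
  set B : Fin n → Finset ℤ := fun i => (hT i).1.toFinset with hBdef
  have hBcard : ∀ i, (B i).card = k := by
    intro i
    rw [hBdef]
    simp only
    rw [← Set.ncard_eq_toFinset_card (T i) (hT i).1]
    exact (hT i).2
  have hB2 : ∀ i, 2 ≤ (B i).card := fun i => by rw [hBcard]; exact hk
  -- diameters
  set Dn : ℕ := Finset.univ.sup (fun i => ((B i).max.getD 0 - (B i).min.getD 0).toNat) with hDn
  have hDbound : ∀ i : Fin n, ∀ m mn : ℤ, (B i).max = (m : WithBot ℤ) →
      (B i).min = (mn : WithTop ℤ) → m - mn ≤ (Dn:ℤ) := by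
    intro i m mn hm hmn
    have h1 : ((B i).max.getD 0 - (B i).min.getD 0).toNat ≤ Dn :=
      Finset.le_sup (f := fun i => ((B i).max.getD 0 - (B i).min.getD 0).toNat)
        (Finset.mem_univ i)
    have e1 : (B i).max.getD 0 = m := by rw [hm]; rfl
    have e2 : (B i).min.getD 0 = mn := by rw [hmn]; rfl
    rw [e1, e2] at h1
    omega
  -- choose L
  set L : ℕ := max 1 (Nat.ceil ((Dn:ℝ)/ε)) with hL
  have hL1 : 1 ≤ L := le_max_left _ _
  have hLpos : 0 < L := hL1
  have hLr : (0:ℝ) < (L:ℝ) := by exact_mod_cast hLpos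
  have hDL : (Dn:ℝ) / L ≤ ε := by
    rw [div_le_iff₀ hLr]
    have h1 : (Dn:ℝ)/ε ≤ (Nat.ceil ((Dn:ℝ)/ε) : ℝ) := Nat.le_ceil _
    have h2 : ((Nat.ceil ((Dn:ℝ)/ε) : ℕ) : ℝ) ≤ (L:ℝ) := by
      exact_mod_cast le_max_right 1 (Nat.ceil ((Dn:ℝ)/ε))
    have := le_trans h1 h2
    calc (Dn:ℝ) = ((Dn:ℝ)/ε) * ε := by field_simp
      _ ≤ (L:ℝ) * ε := by apply mul_le_mul_of_nonneg_right this hε.le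
      _ = ε * L := by ring
  set Sh : Finset ℕ := (Finset.range L).filter (fun x => shot B x) with hShdef
  set R : Finset ℤ := (Sh.image (fun x : ℕ => (x:ℤ))) ∪ Finset.Ico ((L:ℤ) - Dn) (L:ℤ)
    with hRdef
  -- hitting
  have hhits : ∀ S ∈ {S | ∃ i, S = T i}, ∀ c : ℤ, ∃ s ∈ S, (c + s) % ((L:ℕ):ℤ) ∈ R := by
    rintro S ⟨i, rfl⟩ c
    have hne : (B i).Nonempty := Finset.card_pos.mp (by have := hB2 i; omega)
    obtain ⟨m, hm⟩ := Finset.max_of_nonempty hne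
    obtain ⟨mn, hmn⟩ := Finset.min_of_nonempty hne
    have hmmem : m ∈ B i := Finset.mem_of_max hm
    have hmnmem : mn ∈ B i := Finset.mem_of_min hmn
    have hmnm : mn ≤ m := by
      have := Finset.min_le hmmem; rw [hmn] at this; exact_mod_cast this
    have hmemT : ∀ s, s ∈ B i ↔ s ∈ T i := by
      intro s; rw [hBdef]; simp only; exact Set.Finite.mem_toFinset _
    set a : ℤ := c + mn with ha
    set j : ℤ := a / L with hj
    have hLz : (0:ℤ) < (L:ℤ) := by exact_mod_cast hLpos
    have hmod : (L:ℤ) * j + a % L = a := Int.mul_ediv_add_emod a L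
    have hmod0 : 0 ≤ a % (L:ℤ) := Int.emod_nonneg a hLz.ne'
    have hmodL : a % (L:ℤ) < L := Int.emod_lt_of_pos a hLz
    rcases lt_or_ge (c + m) ((L:ℤ) * j + L) with hcase | hcase
    · -- translate entirely within window [Lj, Lj + L)
      obtain ⟨s, hs, hshot⟩ := greedy_hits B i m mn hm hmn (c - L*j) (by omega)
      have hsm : s ≤ m := by
        have := Finset.le_max hs; rw [hm] at this; exact_mod_cast this
      have hmns : mn ≤ s := by
        have := Finset.min_le hs; rw [hmn] at this; exact_mod_cast this
      refine ⟨s, (hmemT s).mp hs, ?_⟩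
      have h0 : 0 ≤ c - L*j + s := by omega
      have h1 : c - L*j + s < L := by omega
      have hmodeq : (c + s) % (L:ℤ) = c - L*j + s := by
        have : c + s = (c - L*j + s) + j * L := by ring
        rw [this, Int.add_mul_emod_self_right, Int.emod_eq_of_lt h0 h1]
      rw [hmodeq, hRdef]
      apply Finset.mem_union_left
      rw [Finset.mem_image]
      refine ⟨(c - L*j + s).toNat, ?_, by omega⟩
      rw [hShdef, Finset.mem_filter, Finset.mem_range]
      constructor
      · omega
      · have : ((c - L*j) + s).toNat = (c - L*j + s).toNat := by ring_nf
        rw [← this]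
        exact hshot
    · -- translate straddles the boundary: min lands in the strip
      refine ⟨mn, (hmemT mn).mp hmnmem, ?_⟩
      rw [hRdef]
      apply Finset.mem_union_right
      rw [Finset.mem_Ico]
      have hD := hDbound i m mn hm hmn
      rw [show c + mn = a from ha.symm]
      omega
  have hmain := piercing_le_mod {S | ∃ i, S = T i} R L hLpos hhits
  -- card bound
  have hcount := greedy_count (by omega) B hB2 L (shot B) (fun x => shot_iff B x)
  have hRcard : R.card ≤ Sh.card + Dn := by
    calc R.card ≤ (Sh.image (fun x : ℕ => (x:ℤ))).card + (Finset.Ico ((L:ℤ) - Dn) (L:ℤ)).card :=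
          Finset.card_union_le _ _
      _ ≤ Sh.card + Dn := by
          have h1 : (Sh.image (fun x : ℕ => (x:ℤ))).card ≤ Sh.card := Finset.card_image_le
          have h2 : (Finset.Ico ((L:ℤ) - Dn) (L:ℤ)).card = Dn := by
            rw [Int.card_Ico]; omega
          omega
  have hnr : (0:ℝ) < (n:ℝ) + 1 := by positivity
  have hfinal : (R.card : ℝ) / L ≤ (n:ℝ)/(n+1) + ε := by
    have hSh : (Sh.card : ℝ) ≤ (n:ℝ) * L / (n+1) := by
      rw [le_div_iff₀ hnr]
      have h2 : ((n:ℝ)+1) * Sh.card ≤ (n:ℝ) * L := by exact_mod_cast hcount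
      linarith [h2]
    calc (R.card : ℝ) / L ≤ ((Sh.card : ℝ) + Dn) / L := by
          gcongr
          · exact_mod_cast hRcard
      _ ≤ ((n:ℝ) * L / (n+1) + Dn) / L := by
          rw [div_le_div_iff_of_pos_right hLr]
          linarith [hSh]
      _ = (n:ℝ)/(n+1) + (Dn:ℝ)/L := by
          rw [add_div]
          congr 1
          rw [div_div, mul_comm ((n:ℝ)+1) (L:ℝ), ← div_div]
          rw [mul_div_assoc, div_self hLr.ne', mul_one]
      _ ≤ (n:ℝ)/(n+1) + ε := by linarith
  linarith [hmain, hfinal]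

open Classical in
lemma bound2 (n k : ℕ) (hn : 1 ≤ n) (hk : 2 ≤ k) (T : Fin n → Set ℤ)
    (hT : ∀ i, (T i).Finite ∧ (T i).ncard = k) :
    piercing {S | ∃ i, S = T i} ≤ (1 + Real.log (k*n))/k := by
  apply le_of_forall_pos_le_add
  intro ε hε
  set B : Fin n → Finset ℤ := fun i => (hT i).1.toFinset with hBdef
  have hBcard : ∀ i, (B i).card = k := by
    intro i
    rw [hBdef]
    simp only
    rw [← Set.ncard_eq_toFinset_card (T i) (hT i).1]
    exact (hT i).2
  have hmemT : ∀ i s, s ∈ B i ↔ s ∈ T i := by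
    intro i s; rw [hBdef]; simp only; exact Set.Finite.mem_toFinset _
  set Dn : ℕ := Finset.univ.sup (fun i => ((B i).max.getD 0 - (B i).min.getD 0).toNat) with hDn
  have hDbound : ∀ i : Fin n, ∀ m mn : ℤ, (B i).max = (m : WithBot ℤ) →
      (B i).min = (mn : WithTop ℤ) → m - mn ≤ (Dn:ℤ) := by
    intro i m mn hm hmn
    have h1 : ((B i).max.getD 0 - (B i).min.getD 0).toNat ≤ Dn :=
      Finset.le_sup (f := fun i => ((B i).max.getD 0 - (B i).min.getD 0).toNat)
        (Finset.mem_univ i)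
    have e1 : (B i).max.getD 0 = m := by rw [hm]; rfl
    have e2 : (B i).min.getD 0 = mn := by rw [hmn]; rfl
    rw [e1, e2] at h1
    omega
  -- choose the period p
  set p : ℕ := max (max (Dn+1) k) (Nat.ceil (1/ε)) with hp
  have hpD : Dn < p := by
    have : Dn + 1 ≤ p := le_trans (le_max_left _ _) (le_max_left _ _)
    omega
  have hpk : k ≤ p := le_trans (le_max_right _ _) (le_max_left _ _)
  have hppos : 0 < p := by omega
  have hpr : (0:ℝ) < (p:ℝ) := by exact_mod_cast hppos
  have hkr : (0:ℝ) < (k:ℝ) := by exact_mod_cast (by omega : 0 < k)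
  have hnr : (0:ℝ) < (n:ℝ) := by exact_mod_cast hn
  have hpe : 1/(p:ℝ) ≤ ε := by
    rw [div_le_iff₀ hpr]
    have h1 : (1/ε : ℝ) ≤ (Nat.ceil (1/ε) : ℝ) := Nat.le_ceil _
    have h2 : ((Nat.ceil (1/ε) : ℕ) : ℝ) ≤ (p:ℝ) := by
      exact_mod_cast le_trans (le_max_right _ _) (le_refl p)
    calc (1:ℝ) = (1/ε) * ε := by field_simp
      _ ≤ (p:ℝ) * ε := mul_le_mul_of_nonneg_right (le_trans h1 h2) hε.le
      _ = ε * p := by ring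
  -- the covering system
  set U : Finset ℤ := Finset.Ico (0:ℤ) (p:ℤ) with hU
  have hUcard : U.card = p := by rw [hU, Int.card_Ico]; omega
  set J : Finset (Fin n × ℤ) := Finset.univ ×ˢ U with hJ
  have hJcard : J.card = n * p := by
    rw [hJ, Finset.card_product, Finset.card_univ, Fintype.card_fin, hUcard]
  set A : Fin n × ℤ → Finset ℤ := fun j => (B j.1).image (fun s => (j.2 + s) % (p:ℤ)) with hA
  have hAprop : ∀ j ∈ J, A j ⊆ U ∧ (A j).card = k := by
    intro j _
    constructor
    · intro x hx
      rw [hA] at hx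
      simp only [Finset.mem_image] at hx
      obtain ⟨s, _, rfl⟩ := hx
      rw [hU, Finset.mem_Ico]
      have hpz : (0:ℤ) < (p:ℤ) := by exact_mod_cast hppos
      exact ⟨Int.emod_nonneg _ hpz.ne', Int.emod_lt_of_pos _ hpz⟩
    · rw [hA]
      simp only
      rw [Finset.card_image_of_injOn, hBcard]
      intro s hs s' hs' hss
      have hne : (B j.1).Nonempty := Finset.card_pos.mp (by rw [hBcard]; omega)
      obtain ⟨m, hm⟩ := Finset.max_of_nonempty hne
      obtain ⟨mn, hmn⟩ := Finset.min_of_nonempty hne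
      have hub : ∀ y ∈ B j.1, mn ≤ y ∧ y ≤ m := by
        intro y hy
        constructor
        · have := Finset.min_le hy; rw [hmn] at this; exact_mod_cast this
        · have := Finset.le_max hy; rw [hm] at this; exact_mod_cast this
      have hd := hDbound j.1 m mn hm hmn
      simp only at hss
      have hdvd : (p:ℤ) ∣ (j.2 + s) - (j.2 + s') := by
        rw [Int.dvd_iff_emod_eq_zero, Int.sub_emod, hss, sub_self, Int.zero_emod]
      have heq : (j.2 + s) - (j.2 + s') = s - s' := by ring
      rw [heq] at hdvd
      have h1 := hub s hs
      have h2 := hub s' hs'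
      have habs2 : |s - s'| ≤ (Dn:ℤ) := by rw [abs_sub_le_iff]; omega
      have hpzD : ((Dn:ℤ)) < (p:ℤ) := by exact_mod_cast hpD
      by_contra hss'
      have h0 : 0 < |s - s'| := abs_pos.mpr (sub_ne_zero.mpr hss')
      have hle := Int.le_of_dvd h0 ((dvd_abs _ _).mpr hdvd)
      linarith [h0, hle, habs2, hpzD]
  -- choose t and run the covering argument
  set t : ℕ := Nat.ceil ((p:ℝ)/k * Real.log (k*n)) with ht
  have hlognn : 0 ≤ Real.log (k*n) := by
    apply Real.log_nonneg
    have h1 : (2:ℝ) ≤ (k:ℝ) := by exact_mod_cast hk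
    have h2 : (1:ℝ) ≤ (n:ℝ) := by exact_mod_cast hn
    nlinarith [h1, h2]
  obtain ⟨R0, hR0card, hmiss⟩ := cover_exists J A U k (by omega) (hUcard ▸ hpk) hAprop t
  set M := J.filter (fun j => A j ∩ R0 = ∅) with hM
  rw [hUcard, hJcard] at hmiss
  -- bound the number of missed translates
  have hknr : (0:ℝ) < (k:ℝ) * n := by positivity
  have hmissb : (M.card : ℝ) ≤ (p:ℝ)/k := by
    have h0 : (0:ℝ) ≤ 1 - (k:ℝ)/p := by
      rw [sub_nonneg, div_le_one hpr]; exact_mod_cast hpk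
    have h1 : 1 - (k:ℝ)/p ≤ Real.exp ((-((k:ℝ)/p))) := by
      have := Real.add_one_le_exp ((-((k:ℝ)/p)))
      linarith
    have h2 : (1 - (k:ℝ)/p)^t ≤ Real.exp ((-((k:ℝ)/p)))^t := pow_le_pow_left₀ h0 h1 t
    have h3 : Real.exp ((-((k:ℝ)/p)))^t = Real.exp ((t:ℝ) * ((-((k:ℝ)/p)))) := by
      rw [← Real.exp_nat_mul]
    have h4 : (t:ℝ) * ((-((k:ℝ)/p))) ≤ -Real.log ((k:ℝ)*n) := by
      have hceil : (p:ℝ)/k * Real.log ((k:ℝ)*n) ≤ (t:ℝ) := by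
        rw [ht]
        have := Nat.le_ceil ((p:ℝ)/k * Real.log ((k:ℝ)*(n:ℝ)))
        push_cast
        push_cast at this
        exact this
      have hkp : (0:ℝ) < (k:ℝ)/p := by positivity
      rw [mul_neg, neg_le_neg_iff]
      calc Real.log ((k:ℝ)*n) = ((p:ℝ)/k * Real.log ((k:ℝ)*n)) * ((k:ℝ)/p) := by
            field_simp
        _ ≤ (t:ℝ) * ((k:ℝ)/p) := mul_le_mul_of_nonneg_right hceil hkp.le
        _ = (t:ℝ) * ((k:ℝ)/p) := rfl
    have h5 : Real.exp ((t:ℝ) * ((-((k:ℝ)/p)))) ≤ Real.exp (-Real.log ((k:ℝ)*n)) :=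
      Real.exp_le_exp.mpr h4
    have h6 : Real.exp (-Real.log ((k:ℝ)*n)) = 1/((k:ℝ)*n) := by
      rw [Real.exp_neg, Real.exp_log hknr, one_div]
    calc (M.card : ℝ) ≤ ((n:ℕ)*(p:ℕ) : ℕ) * (1 - (k:ℝ)/p)^t := hmiss
      _ ≤ ((n:ℝ)*p) * (1/((k:ℝ)*n)) := by
          push_cast
          apply mul_le_mul_of_nonneg_left _ (by positivity)
          calc (1 - (k:ℝ)/p)^t ≤ Real.exp ((-((k:ℝ)/p)))^t := h2
            _ = Real.exp ((t:ℝ) * ((-((k:ℝ)/p)))) := h3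
            _ ≤ Real.exp (-Real.log ((k:ℝ)*n)) := h5
            _ = 1/((k:ℝ)*n) := h6
      _ = (p:ℝ)/k := by field_simp
  -- repair the missed translates
  set pick : Fin n × ℤ → ℤ := fun j => if h : (A j).Nonempty then (A j).min' h else 0
    with hpick
  set R : Finset ℤ := R0 ∪ M.image pick with hR
  have hhits : ∀ S ∈ {S | ∃ i, S = T i}, ∀ m : ℤ, ∃ s ∈ S, (m + s) % ((p:ℕ):ℤ) ∈ R := by
    rintro S ⟨i, rfl⟩ m
    have hpz : (0:ℤ) < (p:ℤ) := by exact_mod_cast hppos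
    set c : ℤ := m % p with hc
    have hcU : c ∈ U := by
      rw [hU, Finset.mem_Ico]
      exact ⟨Int.emod_nonneg _ hpz.ne', Int.emod_lt_of_pos _ hpz⟩
    have hjJ : (i, c) ∈ J := by
      rw [hJ, Finset.mem_product]
      exact ⟨Finset.mem_univ _, hcU⟩
    have hAne : (A (i, c)).Nonempty := by
      apply Finset.card_pos.mp
      rw [(hAprop _ hjJ).2]
      omega
    have hex : ∃ x, x ∈ A (i, c) ∧ x ∈ R := by
      by_cases hcase : A (i, c) ∩ R0 = ∅
      · have hmem : (i, c) ∈ M := by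
          rw [hM, Finset.mem_filter]; exact ⟨hjJ, hcase⟩
        refine ⟨pick (i, c), ?_, ?_⟩
        · rw [hpick]; simp only [dif_pos hAne]; exact Finset.min'_mem _ _
        · rw [hR]
          exact Finset.mem_union_right _ (Finset.mem_image_of_mem pick hmem)
      · obtain ⟨x, hx⟩ := Finset.nonempty_of_ne_empty hcase
        rw [Finset.mem_inter] at hx
        exact ⟨x, hx.1, Finset.mem_union_left _ hx.2⟩
    obtain ⟨x, hxA, hxR⟩ := hex
    rw [hA] at hxA
    simp only [Finset.mem_image] at hxA
    obtain ⟨s, hsB, hsx⟩ := hxA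
    refine ⟨s, (hmemT i s).mp hsB, ?_⟩
    have hdec : m % (p:ℤ) + (p:ℤ) * (m / p) = m := Int.emod_add_mul_ediv m p
    have : m + s = (c + s) + (m/(p:ℤ))*(p:ℤ) := by rw [hc]; linarith [hdec]
    rw [this, Int.add_mul_emod_self_right]
    rw [hsx]
    exact hxR
  have hmain := piercing_le_mod {S | ∃ i, S = T i} R p hppos hhits
  -- cardinality bound
  have hRcard : (R.card : ℝ) ≤ (t:ℝ) + (p:ℝ)/k := by
    have h1 : R.card ≤ R0.card + (M.image pick).card := by
      rw [hR]; exact Finset.card_union_le _ _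
    have h2 : (M.image pick).card ≤ M.card := Finset.card_image_le
    have h3 : ((R0.card + (M.image pick).card : ℕ) : ℝ) ≤ (t:ℝ) + (p:ℝ)/k := by
      push_cast
      have h4 : (R0.card : ℝ) ≤ (t:ℝ) := by exact_mod_cast hR0card
      have h5 : ((M.image pick).card : ℝ) ≤ (M.card : ℝ) := by exact_mod_cast h2
      linarith [hmissb]
    calc (R.card : ℝ) ≤ ((R0.card + (M.image pick).card : ℕ) : ℝ) := by exact_mod_cast h1
      _ ≤ (t:ℝ) + (p:ℝ)/k := h3
  have htb : (t:ℝ) ≤ (p:ℝ)/k * Real.log ((k:ℝ)*n) + 1 := by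
    rw [ht]
    have hnn : 0 ≤ (p:ℝ)/k * Real.log ((k:ℝ)*(n:ℝ)) := by positivity
    have := (Nat.ceil_lt_add_one hnn).le
    push_cast
    push_cast at this
    exact this
  have hfinal : (R.card : ℝ)/p ≤ (1 + Real.log ((k:ℝ)*n))/k + ε := by
    calc (R.card : ℝ)/p ≤ ((p:ℝ)/k * Real.log ((k:ℝ)*n) + 1 + (p:ℝ)/k)/p := by
          rw [div_le_div_iff_of_pos_right hpr]
          linarith [hRcard, htb]
      _ = (1 + Real.log ((k:ℝ)*n))/k + 1/p := by field_simp; ring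
      _ ≤ (1 + Real.log ((k:ℝ)*n))/k + ε := by linarith [hpe]
  have : ((k:ℝ)*(n:ℝ)) = (((k*n : ℕ)):ℝ) := by push_cast; ring
  calc piercing {S | ∃ i, S = T i} ≤ (R.card : ℝ)/p := hmain
    _ ≤ (1 + Real.log ((k:ℝ)*n))/k + ε := hfinal
    _ = (1 + Real.log ((k:ℕ)*(n:ℕ) : ℝ))/k + ε := by norm_cast

end Aux

theorem stmt11 (n k : ℕ) (hn : 1 ≤ n) (hk : 2 ≤ k) :
    sSup {x : ℝ | ∃ T : Fin n → Set ℤ, (∀ i, (T i).Finite ∧ (T i).ncard = k) ∧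
        x = piercing {S | ∃ i, S = T i}} ≤
      min ((n : ℝ) / (n + 1)) ((1 + Real.log (k * n)) / k) := by
  have hlog : 0 ≤ Real.log ((k:ℝ) * n) := by
    apply Real.log_nonneg
    have h1 : (2:ℝ) ≤ (k:ℝ) := by exact_mod_cast hk
    have h2 : (1:ℝ) ≤ (n:ℝ) := by exact_mod_cast hn
    nlinarith [h1, h2]
  apply Real.sSup_le
  · rintro x ⟨T, hT, rfl⟩
    exact le_min (bound1 n k hn hk T hT) (bound2 n k hn hk T hT)
  · apply le_min
    · positivity
    · apply div_nonneg (by linarith [hlog]) (by positivity)
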